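/- arXiv:1904.03169 — 2 statements merged into one kernel-verified Lean document; each statement's English description precedes it below -/
import Mathlib

section
/- Let X₁, X₂, … be a strictly stationary and ergodic sequence of real random variables with unbounded support above (essential supremum +∞) and let (kₙ) be integers with 1 ≤ kₙ ≤ n and kₙ/n → 1. Then the order statistics X_{kₙ:n} converge almost surely to +∞ as n → ∞. -/
open MeasureTheory Filter Set
open scoped Topology ENNReal

noncomputable section

/-- The shift map on real sequences. -/
def seqShift (y : ℕ → ℝ) : ℕ → ℝ := fun n => y (n + 1)

/-- The path map associating to each sample point the sequence of observations. -/
def path {Ω : Type*} (X : ℕ → Ω → ℝ) (ω : Ω) : ℕ → ℝ := fun n => X n ω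

/-- The `k`-th smallest value (k counted from 1) among `x 0, …, x (n-1)`. -/
def ordStat (k n : ℕ) (x : ℕ → ℝ) : ℝ :=
  ((List.ofFn (fun i : Fin n => x i)).insertionSort (· ≤ ·)).getD (k - 1) 0

/-- Number of observations among `x 0, …, x (n-1)` in the left `a`-neighborhood of the
`k`-th order statistic. -/
def nearCount (k n : ℕ) (a : ℝ) (x : ℕ → ℝ) : ℕ :=
  ((Finset.range n).filter
    (fun i => ordStat k n x - a < x i ∧ x i < ordStat k n x)).card

/-- Sum of observations among `x 0, …, x (n-1)` in the left `a`-neighborhood of the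
`k`-th order statistic. -/
def nearSum (k n : ℕ) (a : ℝ) (x : ℕ → ℝ) : ℝ :=
  ∑ i ∈ Finset.range n,
    if ordStat k n x - a < x i ∧ x i < ordStat k n x then x i else 0

/-- The right endpoint `sup {x : P(X ≤ x) < 1}` of the support of `X`, as an extended real. -/
def rightEndpoint {Ω : Type*} [MeasurableSpace Ω] (μ : Measure Ω) (X : Ω → ℝ) : EReal :=
  sSup ((fun r : ℝ => (r : EReal)) '' {r : ℝ | μ {ω | X ω ≤ r} < 1})

/-! ### Auxiliary lemmas -/

section KW
variable {α : Type*} [MeasurableSpace α] {ν : Measure α} [IsProbabilityMeasure ν]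
  {σ : α → α} {g : α → ℝ}

lemma bS_meas (hσ : Measurable σ) (hg : Measurable g) (n : ℕ) :
    Measurable (birkhoffSum σ g n) := by
  unfold birkhoffSum
  exact Finset.measurable_sum _ fun i _ => hg.comp (hσ.iterate i)

lemma bS_nonneg (hg0 : ∀ y, 0 ≤ g y) (n : ℕ) (y : α) : 0 ≤ birkhoffSum σ g n y :=
  Finset.sum_nonneg fun _ _ => hg0 _

lemma bS_mono {g' : α → ℝ} (h : ∀ y, g y ≤ g' y) (n : ℕ) (y : α) :
    birkhoffSum σ g n y ≤ birkhoffSum σ g' n y :=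
  Finset.sum_le_sum fun _ _ => h _

lemma integrable_of_bdd (hg : Measurable g) (hb : ∀ y, |g y| ≤ 1) : Integrable g ν :=
  (integrable_const (1:ℝ)).mono' hg.aestronglyMeasurable (Eventually.of_forall hb)

lemma integral_bS (hmp : MeasurePreserving σ ν ν) (hg : Measurable g)
    (hint : Integrable g ν) (n : ℕ) :
    ∫ y, birkhoffSum σ g n y ∂ν = n * ∫ y, g y ∂ν := by
  unfold birkhoffSum
  rw [integral_finset_sum]
  · have : ∀ i : ℕ, ∫ y, g (σ^[i] y) ∂ν = ∫ y, g y ∂ν := by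
      intro i
      have h1 : MeasurePreserving σ^[i] ν ν := hmp.iterate i
      calc ∫ y, g (σ^[i] y) ∂ν
          = ∫ y, g y ∂(Measure.map σ^[i] ν) :=
            (integral_map h1.measurable.aemeasurable
              (by rw [h1.map_eq]; exact hg.aestronglyMeasurable)).symm
        _ = ∫ y, g y ∂ν := by rw [h1.map_eq]
    simp only [this, Finset.sum_const, Finset.card_range, nsmul_eq_mul]
  · intro i _
    have h1 : MeasurePreserving σ^[i] ν ν := hmp.iterate i
    exact (h1.integrable_comp hg.aestronglyMeasurable).mpr hint
set_option maxHeartbeats 800000 in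
lemma KW (hmp : MeasurePreserving σ ν ν) (hg : Measurable g)
    (hg0 : ∀ y, 0 ≤ g y) (hg1 : ∀ y, g y ≤ 1) (ρ : ℝ) (hρ0 : 0 ≤ ρ) (hρ1 : ρ ≤ 1)
    (hfreq : ∀ᵐ y ∂ν, ∃ n, 1 ≤ n ∧ ρ * n ≤ birkhoffSum σ g n y) :
    ρ ≤ ∫ y, g y ∂ν := by
  have hgint : Integrable g ν := integrable_of_bdd hg (fun y => by
    rw [abs_le]; exact ⟨by linarith [hg0 y], hg1 y⟩)
  refine le_of_forall_pos_le_add (fun ε hε => ?_)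
  set E : ℕ → Set α := fun L => {y | ∀ n, 1 ≤ n → n ≤ L → birkhoffSum σ g n y < ρ * n}
    with hE
  have hEmeas : ∀ L, MeasurableSet (E L) := by
    intro L
    have : E L = ⋂ (n : ℕ) (_ : 1 ≤ n) (_ : n ≤ L),
        {y | birkhoffSum σ g n y < ρ * n} := by
      ext y; simp [hE]
    rw [this]
    exact MeasurableSet.iInter fun n => MeasurableSet.iInter fun _ =>
      MeasurableSet.iInter fun _ => measurableSet_lt (bS_meas hmp.measurable hg n) measurable_const
  have hanti : Antitone E := by
    intro a b hab y hy n h1 h2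
    exact hy n h1 (h2.trans hab)
  have hInter : ν (⋂ L, E L) = 0 := by
    have hsub : (⋂ L, E L) ⊆ {y | ¬ ∃ n, 1 ≤ n ∧ ρ * n ≤ birkhoffSum σ g n y} := by
      intro y hy
      simp only [Set.mem_iInter] at hy
      rintro ⟨n, hn1, hn2⟩
      exact absurd hn2 (not_le.mpr (hy n n hn1 le_rfl))
    exact measure_mono_null hsub (ae_iff.mp hfreq)
  have htend : Tendsto (fun L => ν (E L)) atTop (𝓝 0) := by
    have := tendsto_measure_iInter_atTop (fun L => (hEmeas L).nullMeasurableSet) hanti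
      ⟨0, measure_ne_top ν _⟩
    rwa [hInter] at this
  obtain ⟨L, hL⟩ : ∃ L, ν (E L) < ENNReal.ofReal ε := by
    exact (htend.eventually_lt_const (ENNReal.ofReal_pos.mpr hε)).exists
  set G : α → ℝ := fun y => g y + (E L).indicator (fun _ => (1:ℝ)) y with hG
  have hGmeas : Measurable G := hg.add (measurable_const.indicator (hEmeas L))
  have hG0 : ∀ y, 0 ≤ G y := fun y => add_nonneg (hg0 y)
    (Set.indicator_nonneg (fun _ _ => zero_le_one) y)
  have hGg : ∀ y, g y ≤ G y := fun y => le_add_of_nonneg_right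
    (Set.indicator_nonneg (fun _ _ => zero_le_one) y)
  have hGint : Integrable G ν :=
    hgint.add ((integrable_const (1:ℝ)).indicator (hEmeas L))
  -- key combinatorial estimate
  have key : ∀ N : ℕ, ∀ y : α, ρ * N - ρ * L ≤ birkhoffSum σ G N y := by
    intro N
    induction N using Nat.strong_induction_on with
    | _ N ih =>
      intro y
      rcases Nat.eq_zero_or_pos N with h0 | hNpos
      · subst h0
        simp only [Nat.cast_zero, mul_zero, birkhoffSum_zero, zero_sub]
        nlinarith [Nat.cast_nonneg (α := ℝ) L]
      by_cases hy : y ∈ E L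
      · have hdec : birkhoffSum σ G N y = G y + birkhoffSum σ G (N - 1) (σ y) := by
          rw [← birkhoffSum_succ']
          congr 1
          omega
        have h1' : (1:ℝ) ≤ G y := by
          rw [hG]
          simp only [Set.indicator_of_mem hy]
          linarith [hg0 y]
        have h2 := ih (N - 1) (by omega) (σ y)
        have hcast : ((N - 1 : ℕ) : ℝ) = (N : ℝ) - 1 := by
          rw [Nat.cast_sub hNpos]; norm_num
        rw [hdec]
        rw [hcast] at h2
        nlinarith
      · obtain ⟨t, ht1, htL, hst⟩ : ∃ t, 1 ≤ t ∧ t ≤ L ∧ ρ * t ≤ birkhoffSum σ g t y := by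
          simp only [hE, Set.mem_setOf_eq, not_forall, not_lt] at hy
          obtain ⟨t, h1, h2, h3⟩ := hy
          exact ⟨t, h1, h2, h3⟩
        rcases le_or_gt t N with htN | htN
        · have hdec : birkhoffSum σ G N y
              = birkhoffSum σ G t y + birkhoffSum σ G (N - t) (σ^[t] y) := by
            rw [← birkhoffSum_add]
            congr 1
            omega
          have h2 := ih (N - t) (by omega) (σ^[t] y)
          have h3 : birkhoffSum σ g t y ≤ birkhoffSum σ G t y := bS_mono hGg t y
          have hcast : ((N - t : ℕ) : ℝ) = (N : ℝ) - t := by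
            rw [Nat.cast_sub htN]
          rw [hdec]
          rw [hcast] at h2
          linarith
        · have hNL : (N : ℝ) ≤ L := by
            exact_mod_cast (by omega : N ≤ L)
          have hnn : 0 ≤ birkhoffSum σ G N y := bS_nonneg hG0 N y
          nlinarith
  -- integrate
  have hIneq : ∀ N : ℕ, ρ * N - ρ * L ≤ N * ∫ y, G y ∂ν := by
    intro N
    have hbint : Integrable (birkhoffSum σ G N) ν := by
      unfold birkhoffSum
      exact integrable_finset_sum _ fun i _ =>
        ((hmp.iterate i).integrable_comp hGmeas.aestronglyMeasurable).mpr hGint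
    have := integral_mono (integrable_const (ρ * N - ρ * L)) hbint (key N)
    rwa [integral_const, probReal_univ, one_smul,
      integral_bS hmp hGmeas hGint N] at this
  have hlim : ρ ≤ ∫ y, G y ∂ν := by
    have h2 : Tendsto (fun N : ℕ => ρ - ρ * L / N) atTop (𝓝 ρ) := by
      have := tendsto_const_div_atTop_nhds_zero_nat (ρ * L)
      simpa using (tendsto_const_nhds (x := ρ)).sub this
    refine le_of_tendsto h2 ?_
    filter_upwards [eventually_ge_atTop 1] with N hN
    have hNpos : (0:ℝ) < N := by exact_mod_cast hN
    have h4 : (ρ * N - ρ * L) / N ≤ ∫ y, G y ∂ν :=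
      (div_le_iff₀ hNpos).mpr (by linarith [hIneq N])
    calc ρ - ρ * L / N = (ρ * N - ρ * L) / N := by field_simp
      _ ≤ _ := h4
  have hval : ∫ y, G y ∂ν = (∫ y, g y ∂ν) + (ν (E L)).toReal := by
    rw [hG, integral_add hgint ((integrable_const (1:ℝ)).indicator (hEmeas L)),
      integral_indicator_const (1:ℝ) (hEmeas L), smul_eq_mul, mul_one]
    rfl
  have hEps : (ν (E L)).toReal ≤ ε := by
    have := ENNReal.toReal_mono (by simp) hL.le
    rwa [ENNReal.toReal_ofReal hε.le] at this
  rw [hval] at hlim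
  linarith

lemma erg_eventually_lt (herg : Ergodic σ ν) (hg : Measurable g)
    (hg0 : ∀ y, 0 ≤ g y) (hg1 : ∀ y, g y ≤ 1) (hp : ∫ y, g y ∂ν < 1) :
    ∃ ρ : ℝ, ρ < 1 ∧ ∀ᵐ y ∂ν, ∀ᶠ n in atTop, birkhoffSum σ g n y < ρ * n := by
  have hmp : MeasurePreserving σ ν ν := herg.toMeasurePreserving
  set p := ∫ y, g y ∂ν with hpdef
  have hp0 : 0 ≤ p := integral_nonneg hg0
  set ρ : ℝ := (1 + p) / 2 with hρdef
  set ρ' : ℝ := (ρ + p) / 2 with hρ'def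
  have hρ1 : ρ < 1 := by rw [hρdef]; linarith
  have hρ0 : 0 ≤ ρ := by rw [hρdef]; linarith
  have hρ'ρ : ρ' < ρ := by rw [hρ'def]; linarith
  have hρ'p : p < ρ' := by rw [hρ'def]; linarith
  have hρ'0 : 0 ≤ ρ' := by rw [hρ'def]; linarith
  set I : Set α := {y | ∃ c : ℕ, ∀ N : ℕ, ∃ n, N ≤ n ∧ ρ * n - c ≤ birkhoffSum σ g n y}
    with hI
  have hImeas : MeasurableSet I := by
    have : I = ⋃ (c : ℕ), ⋂ (N : ℕ), ⋃ (n : ℕ) (_ : N ≤ n),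
        {y | ρ * n - c ≤ birkhoffSum σ g n y} := by
      ext y
      simp [hI, Set.mem_iUnion, Set.mem_iInter]
    rw [this]
    exact MeasurableSet.iUnion fun c => MeasurableSet.iInter fun N =>
      MeasurableSet.iUnion fun n => MeasurableSet.iUnion fun _ =>
        measurableSet_le measurable_const (bS_meas hmp.measurable hg n)
  have hIinv : σ ⁻¹' I = I := by
    ext y
    simp only [Set.mem_preimage, hI, Set.mem_setOf_eq]
    constructor
    · rintro ⟨c, hc⟩
      refine ⟨c + 1, fun N => ?_⟩
      obtain ⟨n, hnN, hn⟩ := hc N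
      refine ⟨n + 1, by omega, ?_⟩
      have hdec : birkhoffSum σ g (n + 1) y = g y + birkhoffSum σ g n (σ y) :=
        birkhoffSum_succ' σ g n y
      have hgy : 0 ≤ g y := hg0 y
      push_cast
      rw [hdec]
      nlinarith
    · rintro ⟨c, hc⟩
      refine ⟨c + 1, fun N => ?_⟩
      obtain ⟨n, hnN, hn⟩ := hc (N + 1)
      refine ⟨n - 1, by omega, ?_⟩
      have hn1 : 1 ≤ n := by omega
      have hdec : birkhoffSum σ g n y = g y + birkhoffSum σ g (n - 1) (σ y) := by
        rw [← birkhoffSum_succ']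
        congr 1
        omega
      have hcast : ((n - 1 : ℕ) : ℝ) = (n : ℝ) - 1 := by
        rw [Nat.cast_sub hn1]; norm_num
      rw [hdec] at hn
      rw [hcast]
      push_cast at hn ⊢
      have := hg1 y
      nlinarith
  rcases herg.ae_empty_or_univ hImeas hIinv with h | h
  · refine ⟨ρ, hρ1, ?_⟩
    have hnull : ν I = 0 := by simpa using measure_congr h
    have : ∀ᵐ y ∂ν, y ∉ I := measure_eq_zero_iff_ae_notMem.mp hnull
    filter_upwards [this] with y hy
    simp only [hI, Set.mem_setOf_eq, not_exists] at hy
    have hy0 := hy 0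
    push_neg at hy0
    obtain ⟨N, hN⟩ := hy0
    rw [eventually_atTop]
    exact ⟨N, fun n hn => by simpa using hN n hn⟩
  · exfalso
    have hfull : ∀ᵐ y ∂ν, y ∈ I := by
      have h2 := measure_eq_zero_iff_ae_notMem.mp (MeasureTheory.ae_eq_univ.mp h)
      filter_upwards [h2] with y hy
      simpa using hy
    have hfreq : ∀ᵐ y ∂ν, ∃ n, 1 ≤ n ∧ ρ' * n ≤ birkhoffSum σ g n y := by
      filter_upwards [hfull] with y hy
      obtain ⟨c, hc⟩ := hy
      obtain ⟨N0, hN0⟩ := exists_nat_ge (c / (ρ - ρ'))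
      obtain ⟨n, hnN, hn⟩ := hc (max 1 N0)
      refine ⟨n, le_trans (le_max_left 1 N0) hnN, ?_⟩
      have hnN0 : (N0 : ℝ) ≤ n := by
        exact_mod_cast le_trans (le_max_right 1 N0) hnN
      have hdiff : (c : ℝ) ≤ (ρ - ρ') * n := by
        rw [div_le_iff₀ (by linarith : (0:ℝ) < ρ - ρ')] at hN0
        nlinarith
      linarith
    have := KW hmp hg hg0 hg1 ρ' hρ'0 (by linarith) hfreq
    rw [← hpdef] at this
    linarith
lemma count_eq (n : ℕ) (x : ℕ → ℝ) (M : ℝ) :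
    (List.ofFn (fun i : Fin n => x i)).countP (fun a => decide (a ≤ M)) =
    ((Finset.range n).filter (fun i => x i ≤ M)).card := by
  induction n with
  | zero => simp
  | succ n ih =>
    rw [List.ofFn_succ']
    simp only [List.concat_eq_append, List.countP_append, Fin.castSucc]
    rw [Finset.range_add_one, Finset.filter_insert]
    by_cases h : x n ≤ M
    · rw [if_pos h, Finset.card_insert_of_notMem (by simp)]
      simp only [List.countP_cons, List.countP_nil, Fin.val_last]
      rw [← ih]
      simp [h]
    · rw [if_neg h]
      simp only [List.countP_cons, List.countP_nil, Fin.val_last]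
      rw [← ih]
      simp [h]

lemma ordStat_gt (k n : ℕ) (x : ℕ → ℝ) (M : ℝ) (hk1 : 1 ≤ k) (hkn : k ≤ n)
    (h : ((Finset.range n).filter (fun i => x i ≤ M)).card < k) : M < ordStat k n x := by
  set l := (List.ofFn fun i : Fin n => x i).insertionSort (· ≤ ·) with hl
  have hlen : l.length = n := by
    rw [hl, List.length_insertionSort, List.length_ofFn]
  have hsorted : l.Pairwise (· ≤ ·) := List.pairwise_insertionSort _ _
  have hidx : k - 1 < l.length := by omega
  have hval : ordStat k n x = l[k-1] := by
    rw [ordStat, ← hl]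
    exact List.getD_eq_getElem l 0 hidx
  rw [hval]
  by_contra hM
  push_neg at hM
  -- all elements of l.take k are ≤ M
  have htake : ∀ a ∈ l.take k, a ≤ M := by
    intro a ha
    rw [List.mem_iff_getElem] at ha
    obtain ⟨i, hi, rfl⟩ := ha
    rw [List.getElem_take]
    have hik : i < k := by
      have := hi
      rw [List.length_take] at this
      omega
    have hin : i < l.length := by omega
    rcases eq_or_lt_of_le (Nat.le_sub_one_of_lt hik) with heq | hlt
    · subst heq; exact hM
    · have := List.pairwise_iff_getElem.mp hsorted i (k-1) hin hidx hlt
      exact le_trans this hM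
  have hcount : k ≤ l.countP (fun a => decide (a ≤ M)) := by
    have h1 : l = l.take k ++ l.drop k := (List.take_append_drop k l).symm
    have h2 : (l.take k).countP (fun a => decide (a ≤ M)) = (l.take k).length :=
      List.countP_eq_length.mpr (fun a ha => by simpa using htake a ha)
    have h3 : (l.take k).length = k := by rw [List.length_take]; omega
    calc k = (l.take k).countP (fun a => decide (a ≤ M)) := by rw [h2, h3]
      _ ≤ l.countP (fun a => decide (a ≤ M)) := by
          conv_rhs => rw [h1]
          rw [List.countP_append]
          omega
  have hperm : l.countP (fun a => decide (a ≤ M)) =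
      (List.ofFn (fun i : Fin n => x i)).countP (fun a => decide (a ≤ M)) :=
    (List.perm_insertionSort _ _).countP_eq _
  rw [hperm, count_eq] at hcount
  omega

end KW

lemma seqShift_iter (i : ℕ) (y : ℕ → ℝ) (m : ℕ) : seqShift^[i] y m = y (m + i) := by
  induction i generalizing y with
  | zero => simp
  | succ i ih =>
    rw [Function.iterate_succ_apply, ih]
    rfl

lemma bS_count (M : ℝ) (n : ℕ) (y : ℕ → ℝ) :
    birkhoffSum seqShift (fun z => if z 0 ≤ M then (1:ℝ) else 0) n y
      = (((Finset.range n).filter (fun i => y i ≤ M)).card : ℝ) := by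
  unfold birkhoffSum
  rw [Finset.card_filter]
  push_cast
  refine Finset.sum_congr rfl fun i _ => ?_
  rw [seqShift_iter]
  simp

lemma measure_le_lt_one {Ω : Type*} [MeasurableSpace Ω] (μ : Measure Ω) (Z : Ω → ℝ)
    (hsup : rightEndpoint μ Z = ⊤) (M : ℝ) : μ {ω | Z ω ≤ M} < 1 := by
  rw [rightEndpoint, sSup_eq_top] at hsup
  obtain ⟨a, ha, hMa⟩ := hsup (M : EReal) (EReal.coe_lt_top M)
  obtain ⟨r, hr, rfl⟩ := ha
  have hMa' : (M : EReal) < (r : EReal) := hMa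
  have hMr : M ≤ r := by exact_mod_cast hMa'.le
  exact lt_of_le_of_lt (measure_mono fun ω h => le_trans h hMr) hr

theorem stmt7 {Ω : Type*} [MeasurableSpace Ω] (μ : Measure Ω) [IsProbabilityMeasure μ]
    (X : ℕ → Ω → ℝ) (hX : ∀ n, Measurable (X n))
    (herg : Ergodic seqShift (Measure.map (path X) μ))
    (hsup : rightEndpoint μ (X 0) = ⊤)
    (k : ℕ → ℕ) (hk : ∀ n, 1 ≤ n → 1 ≤ k n ∧ k n ≤ n)
    (hk1 : Tendsto (fun n => (k n : ℝ) / n) atTop (𝓝 1)) :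
    ∀ᵐ ω ∂μ, Tendsto (fun n => ordStat (k n) n (path X ω)) atTop atTop := by
  classical
  have hpath : Measurable (path X) := measurable_pi_lambda _ hX
  set ν := Measure.map (path X) μ with hν
  haveI : IsProbabilityMeasure ν := Measure.isProbabilityMeasure_map hpath.aemeasurable
  have hdet : ∀ ρ : ℝ, ρ < 1 → ∀ᶠ n in atTop, ρ * n < (k n : ℝ) := by
    intro ρ hρ
    filter_upwards [hk1.eventually_const_lt hρ, eventually_ge_atTop 1] with n h hn
    have hnpos : (0:ℝ) < n := by exact_mod_cast hn
    rw [lt_div_iff₀ hnpos] at h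
    linarith
  have key : ∀ M : ℕ, ∀ᵐ y ∂ν, ∀ᶠ n in atTop, (M : ℝ) < ordStat (k n) n y := by
    intro M
    set g : (ℕ → ℝ) → ℝ := fun z => if z 0 ≤ (M:ℝ) then 1 else 0 with hgdef
    have hSmeas : MeasurableSet {z : ℕ → ℝ | z 0 ≤ (M:ℝ)} :=
      measurableSet_le (measurable_pi_apply 0) measurable_const
    have hgmeas : Measurable g := Measurable.ite hSmeas measurable_const measurable_const
    have hg0 : ∀ y, 0 ≤ g y := fun y => by rw [hgdef]; dsimp only; split <;> norm_num
    have hg1 : ∀ y, g y ≤ 1 := fun y => by rw [hgdef]; dsimp only; split <;> norm_num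
    have hgind : g = Set.indicator {z : ℕ → ℝ | z 0 ≤ (M:ℝ)} (fun _ => (1:ℝ)) := by
      ext z
      simp [hgdef, Set.indicator_apply]
    have hν1 : ν {z : ℕ → ℝ | z 0 ≤ (M:ℝ)} < 1 := by
      rw [hν, Measure.map_apply hpath hSmeas]
      exact measure_le_lt_one μ (X 0) hsup (M:ℝ)
    have hint : ∫ y, g y ∂ν < 1 := by
      have hval : ∫ y, g y ∂ν = (ν {z : ℕ → ℝ | z 0 ≤ (M:ℝ)}).toReal := by
        rw [hgind, integral_indicator_const (1:ℝ) hSmeas, smul_eq_mul, mul_one]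
        rfl
      rw [hval]
      calc (ν {z : ℕ → ℝ | z 0 ≤ (M:ℝ)}).toReal
          < (1 : ℝ≥0∞).toReal :=
            (ENNReal.toReal_lt_toReal (measure_ne_top _ _) ENNReal.one_ne_top).mpr hν1
        _ = 1 := ENNReal.toReal_one
    obtain ⟨ρ, hρ1, hae⟩ := erg_eventually_lt herg hgmeas hg0 hg1 hint
    filter_upwards [hae] with y hy
    filter_upwards [hy, hdet ρ hρ1, eventually_ge_atTop 1] with n h1 h2 hn1
    have hcard : (((Finset.range n).filter (fun i => y i ≤ (M:ℝ))).card : ℝ) < (k n : ℝ) := by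
      rw [← bS_count]
      exact lt_trans h1 h2
    have hcardn : ((Finset.range n).filter (fun i => y i ≤ (M:ℝ))).card < k n := by
      exact_mod_cast hcard
    exact ordStat_gt _ _ _ _ (hk n hn1).1 (hk n hn1).2 hcardn
  have key2 : ∀ᵐ y ∂ν, Tendsto (fun n => ordStat (k n) n y) atTop atTop := by
    filter_upwards [ae_all_iff.mpr key] with y hy
    rw [tendsto_atTop]
    intro b
    obtain ⟨M, hM⟩ := exists_nat_ge b
    filter_upwards [hy M] with n hn
    linarith
  exact ae_of_ae_map hpath.aemeasurable key2

end
end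

section
/- Let X₁, X₂, … be a strictly stationary and ergodic sequence of real random variables with finite essential supremum γ = sup{x : P(X₁ ≤ x) < 1} < ∞, and let (kₙ) be integers with 1 ≤ kₙ ≤ n and kₙ/n → 1. Then X_{kₙ:n} → γ almost surely as n → ∞. -/
open MeasureTheory Filter Set
open scoped Topology ENNReal

noncomputable section

lemma ordStat_le_of_forall_le {n k : ℕ} (hk1 : 1 ≤ k) (hkn : k ≤ n) {x : ℕ → ℝ} {γ : ℝ}
    (hx : ∀ i, x i ≤ γ) : ordStat k n x ≤ γ := by
  set s := (List.ofFn (fun i : Fin n => x i)).insertionSort (· ≤ ·) with hs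
  have hlen : s.length = n := by
    rw [hs, List.length_insertionSort, List.length_ofFn]
  have hlt : k - 1 < s.length := by omega
  rw [ordStat, ← hs, List.getD_eq_getElem s 0 hlt]
  have hmem : s[k-1] ∈ List.ofFn (fun i : Fin n => x i) :=
    (List.mem_insertionSort _).mp (List.getElem_mem hlt)
  obtain ⟨i, hi⟩ := List.mem_ofFn.mp hmem
  rw [← hi]; exact hx i

lemma lt_ordStat_of_count_lt {n k : ℕ} (hk1 : 1 ≤ k) (hkn : k ≤ n) {x : ℕ → ℝ} {c : ℝ}
    (h : ((Finset.range n).filter (fun i => x i ≤ c)).card < k) : c < ordStat k n x := by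
  by_contra hcon
  push_neg at hcon
  set s := (List.ofFn (fun i : Fin n => x i)).insertionSort (· ≤ ·) with hs
  have hlen : s.length = n := by
    rw [hs, List.length_insertionSort, List.length_ofFn]
  have hlt : k - 1 < s.length := by omega
  rw [ordStat, ← hs, List.getD_eq_getElem s 0 hlt] at hcon
  have hsorted : s.Pairwise (· ≤ ·) := List.pairwise_insertionSort _ _
  have htake : ∀ a ∈ s.take k, a ≤ c := by
    intro a ha
    obtain ⟨i, him, hia⟩ := List.mem_take_iff_getElem.mp ha
    have hik : i ≤ k - 1 := by omega
    have h2 : s[i] ≤ s[k-1] := by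
      have := hsorted.rel_get_of_le (a := ⟨i, by omega⟩) (b := ⟨k-1, hlt⟩) (by exact hik)
      simpa using this
    rw [← hia]; exact le_trans h2 hcon
  have hcount1 : k ≤ s.countP (fun a => decide (a ≤ c)) := by
    have h1 : (s.take k).countP (fun a => decide (a ≤ c)) = (s.take k).length :=
      List.countP_eq_length.mpr (by intro a ha; simpa using htake a ha)
    have h2 : (s.take k).length = k := by
      rw [List.length_take]; omega
    calc k = (s.take k).countP (fun a => decide (a ≤ c)) := by rw [h1, h2]
    _ ≤ s.countP _ := (List.take_sublist k s).countP_le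
  have hperm : s.countP (fun a => decide (a ≤ c))
      = (List.ofFn (fun i : Fin n => x i)).countP (fun a => decide (a ≤ c)) :=
    (List.perm_insertionSort _ _).countP_eq _
  have hbridge : ((Finset.range n).filter (fun i => x i ≤ c)).card
      = ((Finset.univ : Finset (Fin n)).filter (fun i : Fin n => x (i : ℕ) ≤ c)).card := by
    rw [← Nat.cast_id ((Finset.range n).filter (fun i => x i ≤ c)).card, ← Finset.sum_boole,
      ← Nat.cast_id ((Finset.univ : Finset (Fin n)).filter (fun i : Fin n => x (i:ℕ) ≤ c)).card,
      ← Finset.sum_boole, Fin.sum_univ_eq_sum_range (fun i => if x i ≤ c then (1:ℕ) else 0)]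
  have hcount2 : (List.ofFn (fun i : Fin n => x i)).countP (fun a => decide (a ≤ c))
      = ((Finset.range n).filter (fun i => x i ≤ c)).card := by
    rw [List.ofFn_eq_map, List.countP_map, hbridge, Fin.univ_def]
    simp [Finset.filter, Finset.card, Multiset.filter_coe, List.countP_eq_length_filter,
      Function.comp]
    rfl
  omega

/-- Garsia's maximal ergodic theorem, in the form: if almost every point has some
positive partial Birkhoff sum, then the integral is nonnegative. -/
lemma maxErg {Y : Type*} [MeasurableSpace Y] (ν : Measure Y) [IsProbabilityMeasure ν]
    {T : Y → Y} (hT : MeasurePreserving T ν ν) {g : Y → ℝ} (hg : Measurable g)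
    {C : ℝ} (hC : ∀ y, |g y| ≤ C)
    (hae : ∀ᵐ y ∂ν, ∃ n, 0 < ∑ i ∈ Finset.range n, g (T^[i] y)) :
    0 ≤ ∫ y, g y ∂ν := by
  have hne : Nonempty Y := by
    by_contra h
    rw [not_nonempty_iff] at h
    have h0 : (univ : Set Y) = ∅ := Set.eq_empty_of_isEmpty _
    have h1 := measure_univ (μ := ν)
    rw [h0, measure_empty] at h1
    exact one_ne_zero h1.symm
  have hC0 : 0 ≤ C := le_trans (abs_nonneg _) (hC (Classical.arbitrary Y))
  set S : ℕ → Y → ℝ := fun n y => ∑ i ∈ Finset.range n, g (T^[i] y) with hS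
  let M : ℕ → Y → ℝ := fun n => Nat.rec (fun _ => 0)
    (fun _ Mn y => max 0 (g y + Mn (T y))) n
  have hM0 : ∀ y, M 0 y = 0 := fun y => rfl
  have hMsucc : ∀ n y, M (n + 1) y = max 0 (g y + M n (T y)) := fun n y => rfl
  have hMnonneg : ∀ n y, 0 ≤ M n y := by
    intro n y
    cases n with
    | zero => rw [hM0]
    | succ m => rw [hMsucc]; exact le_max_left _ _
  have hMmono : ∀ n y, M n y ≤ M (n + 1) y := by
    intro n
    induction n with
    | zero => intro y; rw [hM0]; exact hMnonneg 1 y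
    | succ m ih =>
      intro y
      rw [hMsucc m y, hMsucc (m+1) y]
      exact max_le_max le_rfl (add_le_add le_rfl (ih (T y)))
  have hMbound : ∀ n y, M n y ≤ n * C := by
    intro n
    induction n with
    | zero => intro y; rw [hM0]; simp
    | succ m ih =>
      intro y
      rw [hMsucc m y]
      refine max_le (by positivity) ?_
      have := (abs_le.mp (hC y)).2
      push_cast
      nlinarith [ih (T y)]
  have hSsucc : ∀ n y, S (n + 1) y = g y + S n (T y) := by
    intro n y
    show ∑ i ∈ Finset.range (n+1), g (T^[i] y) = g y + ∑ i ∈ Finset.range n, g (T^[i] (T y))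
    rw [Finset.sum_range_succ' (fun i => g (T^[i] y)) n]
    simp [Function.iterate_succ_apply, add_comm]
  have hSM : ∀ n y, S n y ≤ M n y := by
    intro n
    induction n with
    | zero => intro y; rw [hM0]; simp [hS]
    | succ m ih =>
      intro y
      rw [hMsucc m y, hSsucc m y]
      exact le_max_of_le_right (add_le_add le_rfl (ih (T y)))
  have hMmeas : ∀ n, Measurable (M n) := by
    intro n
    induction n with
    | zero => exact measurable_const
    | succ m ih =>
      exact measurable_const.max (hg.add (ih.comp hT.measurable))
  have hMint : ∀ n, Integrable (M n) ν := by
    intro n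
    refine Integrable.mono' (integrable_const ((n : ℝ) * C)) (hMmeas n).aestronglyMeasurable ?_
    refine ae_of_all _ fun y => ?_
    rw [Real.norm_eq_abs, abs_of_nonneg (hMnonneg n y)]
    exact hMbound n y
  have hgint : Integrable g ν :=
    Integrable.mono' (integrable_const C) hg.aestronglyMeasurable (ae_of_all _ fun y => hC y)
  set E : ℕ → Set Y := fun n => {y | 0 < M n y} with hE
  have hEmeas : ∀ n, MeasurableSet (E n) := fun n =>
    measurableSet_lt measurable_const (hMmeas n)
  have hEmono : Monotone E :=
    monotone_nat_of_le_succ fun n y hy => lt_of_lt_of_le hy (hMmono n y)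
  have hstep : ∀ n, 0 ≤ ∫ y in E n, g y ∂ν := by
    intro n
    have hkey : ∀ y ∈ E n, M n y - M n (T y) ≤ g y := by
      intro y hy
      cases n with
      | zero => simp only [hE, hM0, Set.mem_setOf_eq] at hy; exact absurd hy (lt_irrefl 0)
      | succ m =>
        have h1 : M (m + 1) y = g y + M m (T y) := by
          have h2 := hMsucc m y
          rcases le_or_gt (g y + M m (T y)) 0 with hle | hlt
          · exfalso
            have h3 : M (m+1) y = 0 := by rw [hMsucc m y, max_eq_left hle]
            simp only [hE, Set.mem_setOf_eq, h3] at hy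
            exact lt_irrefl 0 hy
          · rw [h2, max_eq_right hlt.le]
        have h2 : M m (T y) ≤ M (m + 1) (T y) := hMmono m (T y)
        linarith
    have hMTint : Integrable (fun y => M n (T y)) ν := by
      have h := hT.integrable_comp (hMmeas n).aestronglyMeasurable |>.mpr (hMint n)
      exact h
    have hmapint : ∫ y, M n (T y) ∂ν = ∫ y, M n y ∂ν := by
      have h := integral_map (μ := ν) (φ := T) hT.measurable.aemeasurable (f := M n) ?_
      · rw [hT.map_eq] at h; exact h.symm
      · rw [hT.map_eq]; exact (hMmeas n).aestronglyMeasurable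
    have hcompl0 : ∫ y in (E n)ᶜ, M n y ∂ν = 0 := by
      rw [setIntegral_congr_fun (hEmeas n).compl (g := fun _ => (0:ℝ))]
      · exact integral_zero _ _
      · intro y hy
        simp only [hE, Set.mem_compl_iff, Set.mem_setOf_eq, not_lt] at hy
        exact le_antisymm hy (hMnonneg n y)
    have hc1 : ∫ y, M n y ∂ν = ∫ y in E n, M n y ∂ν := by
      rw [← integral_add_compl (hEmeas n) (hMint n), hcompl0, add_zero]
    have hc2 : ∫ y in E n, M n (T y) ∂ν ≤ ∫ y, M n (T y) ∂ν :=
      setIntegral_le_integral hMTint (ae_of_all _ fun y => hMnonneg n (T y))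
    have hc3 : ∫ y in E n, (M n y - M n (T y)) ∂ν ≤ ∫ y in E n, g y ∂ν :=
      setIntegral_mono_on ((hMint n).integrableOn.sub hMTint.integrableOn)
        hgint.integrableOn (hEmeas n) hkey
    rw [integral_sub (hMint n).integrableOn hMTint.integrableOn] at hc3
    linarith
  -- pass to the union
  have haeE : ν (⋃ n, E n)ᶜ = 0 := by
    rw [measure_eq_zero_iff_ae_notMem]
    filter_upwards [hae] with y hy
    obtain ⟨n, hn⟩ := hy
    simp only [Set.notMem_compl_iff]
    exact Set.mem_iUnion.mpr ⟨n, lt_of_lt_of_le hn (hSM n y)⟩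
  have hlim : Tendsto (fun n => ∫ y in E n, g y ∂ν) atTop (𝓝 (∫ y in ⋃ n, E n, g y ∂ν)) :=
    tendsto_setIntegral_of_monotone hEmeas hEmono hgint.integrableOn
  have hpos : 0 ≤ ∫ y in ⋃ n, E n, g y ∂ν := ge_of_tendsto' hlim hstep
  have : ∫ y, g y ∂ν = ∫ y in ⋃ n, E n, g y ∂ν + ∫ y in (⋃ n, E n)ᶜ, g y ∂ν := by
    rw [integral_add_compl (MeasurableSet.iUnion hEmeas) hgint]
  rw [this]
  have : ∫ y in (⋃ n, E n)ᶜ, g y ∂ν = 0 := by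
    have : ν.restrict (⋃ n, E n)ᶜ = 0 := Measure.restrict_eq_zero.mpr haeE
    rw [this, integral_zero_measure]
  linarith

lemma seqShift_iterate (i : ℕ) (y : ℕ → ℝ) : seqShift^[i] y 0 = y i := by
  induction i generalizing y with
  | zero => rfl
  | succ j ih =>
    rw [Function.iterate_succ_apply, ih]
    rfl

lemma density (ν : Measure (ℕ → ℝ)) [IsProbabilityMeasure ν] (herg : Ergodic seqShift ν)
    (c0 : ℝ) (hq : ν {y | y 0 ≤ c0} < 1) :
    ∃ p : ℝ, 0 < p ∧ ∀ᵐ y ∂ν, ∀ᶠ n in atTop,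
      p * n ≤ (((Finset.range n).filter (fun i => c0 < y i)).card : ℝ) := by
  set A : Set (ℕ → ℝ) := {y | c0 < y 0} with hA
  have hAmeas : MeasurableSet A := measurableSet_lt measurable_const (measurable_pi_apply 0)
  have hAc : Aᶜ = {y | y 0 ≤ c0} := by ext y; simp [hA, not_lt]
  have hνA : ν A = 1 - ν {y | y 0 ≤ c0} := by
    have := prob_compl_eq_one_sub (μ := ν) hAmeas.compl
    rw [compl_compl] at this
    rw [this, hAc]
  set p0 : ℝ := (ν A).toReal with hp0def
  have hνApos : 0 < ν A := by
    rw [hνA]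
    exact tsub_pos_iff_lt.mpr hq
  have hp0 : 0 < p0 := ENNReal.toReal_pos hνApos.ne' (measure_ne_top ν A)
  have hp0le1 : p0 ≤ 1 := by
    have h1 : ν A ≤ 1 := prob_le_one
    calc p0 ≤ (1 : ℝ≥0∞).toReal := ENNReal.toReal_mono (by simp) h1
      _ = 1 := by simp
  obtain ⟨q0, hq0a, hq0b⟩ := exists_rat_btwn (half_lt_self hp0)
  obtain ⟨q1, hq1a, hq1b⟩ := exists_rat_btwn hq0a
  set cnt : ℕ → (ℕ → ℝ) → ℕ := fun n y => ((Finset.range n).filter (fun i => c0 < y i)).card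
    with hcnt
  have hcnt_sumN : ∀ n y, cnt n y = ∑ i ∈ Finset.range n, if c0 < y i then 1 else 0 := by
    intro n y
    rw [hcnt]
    rw [Finset.sum_boole, Nat.cast_id]
  have hcnt_sumR : ∀ n y, (cnt n y : ℝ) = ∑ i ∈ Finset.range n, if c0 < y i then (1:ℝ) else 0 := by
    intro n y
    rw [Finset.sum_boole]
  have hcnt_succ : ∀ n y, cnt (n+1) y = cnt n (seqShift y) + (if c0 < y 0 then 1 else 0) := by
    intro n y
    rw [hcnt_sumN, hcnt_sumN, Finset.sum_range_succ' (fun i => if c0 < y i then 1 else 0) n]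
    rfl
  have hmono1 : ∀ n y, cnt n (seqShift y) ≤ cnt (n+1) y := by
    intro n y; rw [hcnt_succ]; omega
  have hmono2 : ∀ n y, cnt (n+1) y ≤ cnt n (seqShift y) + 1 := by
    intro n y; rw [hcnt_succ]; split_ifs <;> omega
  have hcntmeas : ∀ n, Measurable (cnt n) := by
    intro n
    have : (cnt n) = fun y => ∑ i ∈ Finset.range n, if c0 < y i then 1 else 0 := by
      funext y; exact hcnt_sumN n y
    rw [this]
    exact Finset.measurable_sum _ fun i _ =>
      Measurable.ite (measurableSet_lt measurable_const (measurable_pi_apply i))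
        measurable_const measurable_const
  set D : Set (ℕ → ℝ) := {y | ∃ q : ℚ, (q:ℝ) < q0 ∧ ∃ᶠ n in atTop, (cnt n y : ℝ) < q * n}
    with hD
  have hDmeas : MeasurableSet D := by
    have hrw : D = ⋃ q : ℚ, {y | (q:ℝ) < q0 ∧ ∃ᶠ n in atTop, (cnt n y : ℝ) < q * n} := by
      ext y; simp [hD]
    rw [hrw]
    refine MeasurableSet.iUnion fun q => ?_
    by_cases hq' : (q:ℝ) < q0
    · have hrw2 : {y : ℕ → ℝ | (q:ℝ) < q0 ∧ ∃ᶠ n in atTop, (cnt n y : ℝ) < q * n}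
          = ⋂ N, ⋃ n, ⋃ (_ : N ≤ n), {y | (cnt n y : ℝ) < q * n} := by
        ext y
        simp [hq', Filter.frequently_atTop]
      rw [hrw2]
      refine MeasurableSet.iInter fun N => MeasurableSet.iUnion fun n =>
        MeasurableSet.iUnion fun _ => ?_
      exact measurableSet_lt (measurable_from_top.comp (hcntmeas n)) measurable_const
    · have hrw2 : {y : ℕ → ℝ | (q:ℝ) < q0 ∧ ∃ᶠ n in atTop, (cnt n y : ℝ) < q * n} = ∅ := by
        ext y; simp [hq']
      rw [hrw2]
      exact MeasurableSet.empty
  have hqpos_of_freq : ∀ (z : ℕ → ℝ) (q : ℚ), (∃ᶠ n in atTop, (cnt n z : ℝ) < q * n) →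
      0 < (q:ℝ) := by
    intro z q hfreq
    by_contra hle
    push_neg at hle
    obtain ⟨n, hn1, hlt⟩ := Filter.frequently_atTop.mp hfreq 1
    have h1 : (0:ℝ) ≤ (cnt n z : ℝ) := Nat.cast_nonneg _
    have h2 : (q:ℝ) * n ≤ 0 := mul_nonpos_of_nonpos_of_nonneg hle (Nat.cast_nonneg n)
    linarith
  have hev : ∀ (q q' : ℚ), (q:ℝ) < q' → ∀ᶠ m : ℕ in atTop, (q:ℝ) * m + 1 ≤ (q':ℝ) * m := by
    intro q q' hlt
    have h1 : Tendsto (fun m : ℕ => ((q':ℝ) - q) * m) atTop atTop :=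
      (tendsto_natCast_atTop_atTop (R := ℝ)).const_mul_atTop (by linarith)
    filter_upwards [h1.eventually_ge_atTop 1] with m hm
    nlinarith
  have hDinv : seqShift ⁻¹' D = D := by
    ext y
    simp only [Set.mem_preimage, hD, Set.mem_setOf_eq]
    constructor
    · rintro ⟨q, hqlt, hfreq⟩
      have hqpos := hqpos_of_freq _ _ hfreq
      obtain ⟨q', hq'a, hq'b⟩ := exists_rat_btwn hqlt
      refine ⟨q', hq'b, ?_⟩
      have h2 : ∃ᶠ n in atTop, (cnt (n+1) y : ℝ) < (q:ℝ) * ((n+1 : ℕ) : ℝ) + 1 := by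
        refine hfreq.mono fun n hn => ?_
        have hb : (cnt (n+1) y : ℝ) ≤ (cnt n (seqShift y) : ℝ) + 1 := by
          exact_mod_cast hmono2 n y
        push_cast
        push_cast at hb hn
        nlinarith
      have h3 : ∃ᶠ m in atTop, (cnt m y : ℝ) < (q:ℝ) * m + 1 :=
        (tendsto_add_atTop_nat 1).frequently
          (p := fun m => (cnt m y : ℝ) < (q:ℝ) * m + 1) h2
      refine ((h3.and_eventually (hev q q' hq'a)).mono ?_)
      rintro m ⟨hm1, hm2⟩
      linarith
    · rintro ⟨q, hqlt, hfreq⟩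
      have hqpos := hqpos_of_freq _ _ hfreq
      have hqle1 : (q:ℝ) ≤ 1 := le_trans hqlt.le (le_trans hq0b.le hp0le1)
      obtain ⟨q', hq'a, hq'b⟩ := exists_rat_btwn hqlt
      refine ⟨q', hq'b, ?_⟩
      have h2 : ∃ᶠ m in atTop, ((cnt m y : ℝ) < (q:ℝ) * m ∧ 1 ≤ m) :=
        hfreq.and_eventually (eventually_ge_atTop 1)
      have h3 : ∃ᶠ m in atTop, (cnt (m-1) (seqShift y) : ℝ) < (q:ℝ) * ((m-1):ℕ) + 1 := by
        refine h2.mono ?_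
        rintro m ⟨hlt', hm1⟩
        have hm : m - 1 + 1 = m := Nat.succ_pred_eq_of_pos hm1
        have hb : cnt (m-1) (seqShift y) ≤ cnt m y := by
          have := hmono1 (m-1) y
          rwa [hm] at this
        have hbR : (cnt (m-1) (seqShift y) : ℝ) ≤ (cnt m y : ℝ) := by exact_mod_cast hb
        have hmR : ((m-1:ℕ):ℝ) + 1 = (m:ℝ) := by
          have := congrArg (fun t : ℕ => (t:ℝ)) hm
          push_cast at this
          exact this
        rw [← hmR] at hlt'
        nlinarith
      have h4 : ∃ᶠ n in atTop, (cnt n (seqShift y) : ℝ) < (q:ℝ) * n + 1 :=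
        (tendsto_sub_atTop_nat 1).frequently
          (p := fun n => (cnt n (seqShift y) : ℝ) < (q:ℝ) * n + 1) h3
      refine ((h4.and_eventually (hev q q' hq'a)).mono ?_)
      rintro m ⟨hm1, hm2⟩
      linarith
  rcases herg.toPreErgodic.ae_empty_or_univ hDmeas hDinv with hempty | huniv
  · -- D is null : conclude
    have hν0 : ν D = 0 := by
      rwa [← ae_eq_empty]
    have hnotD : ∀ᵐ y ∂ν, y ∉ D := measure_eq_zero_iff_ae_notMem.mp hν0
    refine ⟨p0/2, half_pos hp0, ?_⟩
    filter_upwards [hnotD] with y hy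
    simp only [hD, Set.mem_setOf_eq, not_exists] at hy
    have := hy q1
    rw [not_and] at this
    have hnf := this hq1b
    rw [Filter.not_frequently] at hnf
    filter_upwards [hnf] with n hn
    rw [not_lt] at hn
    calc p0/2 * n ≤ (q1:ℝ) * n := mul_le_mul_of_nonneg_right hq1a.le (Nat.cast_nonneg n)
      _ ≤ _ := hn
  · -- D is conull : contradiction with maximal ergodic theorem
    exfalso
    have hDfull : ∀ᵐ y ∂ν, y ∈ D := by
      have h0 := measure_eq_zero_iff_ae_notMem.mp (ae_eq_univ.mp huniv)
      filter_upwards [h0] with y hy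
      simpa using hy
    set g : (ℕ → ℝ) → ℝ := fun y => (q0:ℝ) - (if c0 < y 0 then 1 else 0) with hg
    have hgmeas : Measurable g :=
      measurable_const.sub (Measurable.ite (measurableSet_lt measurable_const
        (measurable_pi_apply 0)) measurable_const measurable_const)
    have hgbound : ∀ y, |g y| ≤ |(q0:ℝ)| + 1 := by
      intro y
      rw [hg]
      have h1 : |(if c0 < y 0 then (1:ℝ) else 0)| ≤ 1 := by split_ifs <;> simp
      calc |(q0:ℝ) - (if c0 < y 0 then 1 else 0)|
          ≤ |(q0:ℝ)| + |(if c0 < y 0 then (1:ℝ) else 0)| := abs_sub _ _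
        _ ≤ |(q0:ℝ)| + 1 := by linarith
    have hsum : ∀ n y, ∑ i ∈ Finset.range n, g (seqShift^[i] y) = (q0:ℝ) * n - cnt n y := by
      intro n y
      have : ∀ i, g (seqShift^[i] y) = (q0:ℝ) - (if c0 < y i then 1 else 0) := by
        intro i
        rw [hg]
        simp only [seqShift_iterate]
      simp only [this]
      rw [Finset.sum_sub_distrib, Finset.sum_const, hcnt_sumR]
      simp [mul_comm]
    have hae : ∀ᵐ y ∂ν, ∃ n, 0 < ∑ i ∈ Finset.range n, g (seqShift^[i] y) := by
      filter_upwards [hDfull] with y hy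
      simp only [hD, Set.mem_setOf_eq] at hy
      obtain ⟨q, hqlt, hfreq⟩ := hy
      obtain ⟨n, hn1, hlt⟩ := Filter.frequently_atTop.mp hfreq 1
      refine ⟨n, ?_⟩
      rw [hsum]
      have : (q:ℝ) * n ≤ (q0:ℝ) * n := mul_le_mul_of_nonneg_right hqlt.le (Nat.cast_nonneg n)
      linarith
    have h0 := maxErg ν herg.toMeasurePreserving hgmeas hgbound hae
    have hint : ∫ y, g y ∂ν = (q0:ℝ) - p0 := by
      have hgrw : g = fun y => (q0:ℝ) - A.indicator (fun _ => (1:ℝ)) y := by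
        funext y
        rw [hg, Set.indicator_apply]
        rfl
      rw [hgrw, integral_sub (integrable_const _) ((integrable_const 1).indicator hAmeas),
        integral_const, integral_indicator_const (1:ℝ) hAmeas]
      simp [hp0def, measureReal_def]
    rw [hint] at h0
    linarith

theorem stmt8 {Ω : Type*} [MeasurableSpace Ω] (μ : Measure Ω) [IsProbabilityMeasure μ]
    (X : ℕ → Ω → ℝ) (hX : ∀ n, Measurable (X n))
    (herg : Ergodic seqShift (Measure.map (path X) μ))
    (γ : ℝ) (hγ : rightEndpoint μ (X 0) = (γ : EReal))
    (k : ℕ → ℕ) (hk : ∀ n, 1 ≤ n → 1 ≤ k n ∧ k n ≤ n)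
    (hk1 : Tendsto (fun n => (k n : ℝ) / n) atTop (𝓝 1)) :
    ∀ᵐ ω ∂μ, Tendsto (fun n => ordStat (k n) n (path X ω)) atTop (𝓝 γ) := by
  have hpath : Measurable (path X) := measurable_pi_lambda _ hX
  set ν : Measure (ℕ → ℝ) := Measure.map (path X) μ with hν
  have : IsProbabilityMeasure ν := Measure.isProbabilityMeasure_map hpath.aemeasurable
  have hmeasIic : ∀ r : ℝ, MeasurableSet {y : ℕ → ℝ | y 0 ≤ r} := fun r =>
    measurableSet_le (measurable_pi_apply 0) measurable_const
  have hν0r : ∀ r : ℝ, ν {y | y 0 ≤ r} = μ {ω | X 0 ω ≤ r} := by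
    intro r
    rw [hν, Measure.map_apply hpath (hmeasIic r)]
    rfl
  -- consequences of the right endpoint identity
  have hlt1 : ∀ ε : ℝ, 0 < ε → μ {ω | X 0 ω ≤ γ - ε} < 1 := by
    intro ε hε
    have h1 : ((γ - ε : ℝ) : EReal) < rightEndpoint μ (X 0) := by
      rw [hγ]
      exact_mod_cast (by linarith : γ - ε < γ)
    obtain ⟨x, hx, hlt⟩ := lt_sSup_iff.mp h1
    obtain ⟨r, hrS, rfl⟩ := hx
    have hr : γ - ε < r := by
      have h2 : ((γ - ε : ℝ) : EReal) < (r : EReal) := by simpa using hlt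
      exact_mod_cast h2
    calc μ {ω | X 0 ω ≤ γ - ε} ≤ μ {ω | X 0 ω ≤ r} :=
        measure_mono (fun ω hω => le_trans hω hr.le)
      _ < 1 := hrS
  have heq1 : ∀ ε : ℝ, 0 < ε → μ {ω | X 0 ω ≤ γ + ε} = 1 := by
    intro ε hε
    refine le_antisymm prob_le_one ?_
    by_contra hcon
    push_neg at hcon
    have hmem : (γ + ε) ∈ {r : ℝ | μ {ω | X 0 ω ≤ r} < 1} := hcon
    have hle : ((γ + ε : ℝ) : EReal) ≤ rightEndpoint μ (X 0) :=
      le_sSup (Set.mem_image_of_mem _ hmem)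
    rw [hγ] at hle
    have : γ + ε ≤ γ := by exact_mod_cast hle
    linarith
  -- a.e. all coordinates are ≤ γ
  have hν0γ : ν {y | γ < y 0} = 0 := by
    have hcov : {y : ℕ → ℝ | γ < y 0} = ⋃ j : ℕ, {y : ℕ → ℝ | y 0 ≤ γ + 1/(j+1)}ᶜ := by
      ext y
      simp only [Set.mem_setOf_eq, Set.mem_iUnion, Set.mem_compl_iff, not_le]
      constructor
      · intro h
        obtain ⟨j, hj⟩ := exists_nat_one_div_lt (sub_pos.mpr h)
        exact ⟨j, by linarith⟩
      · rintro ⟨j, hj⟩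
        have : (0:ℝ) < 1/(j+1) := by positivity
        linarith
    rw [hcov]
    refine measure_iUnion_null fun j => ?_
    have h1 : ν {y : ℕ → ℝ | y 0 ≤ γ + 1/(j+1)} = 1 := by
      rw [hν0r]
      exact heq1 _ (by positivity)
    rw [prob_compl_eq_zero_iff (hmeasIic _)]
    exact h1
  have H1 : ∀ᵐ y ∂ν, ∀ i, y i ≤ γ := by
    rw [ae_all_iff]
    intro i
    have hset : {y : ℕ → ℝ | γ < y i} = seqShift^[i] ⁻¹' {y | γ < y 0} := by
      ext y
      simp [seqShift_iterate]
    have h0 : ν {y : ℕ → ℝ | γ < y i} = 0 := by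
      rw [hset, (herg.toMeasurePreserving.iterate i).measure_preimage
        (measurableSet_lt measurable_const (measurable_pi_apply 0)).nullMeasurableSet]
      exact hν0γ
    have := measure_eq_zero_iff_ae_notMem.mp h0
    filter_upwards [this] with y hy
    simpa [not_lt] using hy
  -- a.e. the count below γ - 1/(m+1) is eventually < k n
  have H2 : ∀ m : ℕ, ∀ᵐ y ∂ν, ∀ᶠ n in atTop,
      ((Finset.range n).filter (fun i => y i ≤ γ - 1/(m+1))).card < k n := by
    intro m
    set c : ℝ := γ - 1/(m+1) with hc
    have hqm : ν {y | y 0 ≤ c} < 1 := by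
      rw [hν0r]
      exact hlt1 _ (by positivity)
    obtain ⟨p, hp, haep⟩ := density ν herg c hqm
    have hdet : ∀ᶠ n : ℕ in atTop, (1 - p) * n < (k n : ℝ) ∧ 1 ≤ n := by
      have h1 : ∀ᶠ n : ℕ in atTop, 1 - p < (k n : ℝ) / n := by
        have := hk1.eventually (eventually_gt_nhds (by linarith : 1 - p < 1))
        exact this
      filter_upwards [h1, eventually_ge_atTop 1] with n hn hn1
      refine ⟨?_, hn1⟩
      have hnpos : (0:ℝ) < n := by exact_mod_cast hn1
      calc (1 - p) * n < ((k n : ℝ) / n) * n := by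
            exact mul_lt_mul_of_pos_right hn hnpos
        _ = (k n : ℝ) := by field_simp
    filter_upwards [haep] with y hy
    filter_upwards [hy, hdet] with n hn hdn
    obtain ⟨hkn, hn1⟩ := hdn
    -- split the count
    have hsplit : ((Finset.range n).filter (fun i => c < y i)).card
        + ((Finset.range n).filter (fun i => y i ≤ c)).card = n := by
      have h := Finset.card_filter_add_card_filter_not
        (s := Finset.range n) (p := fun i => c < y i)
      simp only [not_lt] at h
      simpa using h
    have hcast : (((Finset.range n).filter (fun i => y i ≤ c)).card : ℝ)
        = (n : ℝ) - (((Finset.range n).filter (fun i => c < y i)).card : ℝ) := by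
      have := congrArg (fun t : ℕ => (t:ℝ)) hsplit
      push_cast at this
      linarith
    have hR : (((Finset.range n).filter (fun i => y i ≤ c)).card : ℝ) < (k n : ℝ) := by
      rw [hcast]
      nlinarith [hn]
    exact_mod_cast hR
  -- assemble
  have hsuff : ∀ᵐ y ∂ν, Tendsto (fun n => ordStat (k n) n y) atTop (𝓝 γ) := by
    have H2all : ∀ᵐ y ∂ν, ∀ m : ℕ, ∀ᶠ n in atTop,
        ((Finset.range n).filter (fun i => y i ≤ γ - 1/(m+1))).card < k n :=
      ae_all_iff.mpr H2
    filter_upwards [H1, H2all] with y h1 h2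
    rw [tendsto_order]
    constructor
    · intro a ha
      obtain ⟨m, hm⟩ := exists_nat_one_div_lt (sub_pos.mpr ha)
      filter_upwards [h2 m, eventually_ge_atTop 1] with n hn hn1
      have hord : γ - 1/(m+1) < ordStat (k n) n y :=
        lt_ordStat_of_count_lt (hk n hn1).1 (hk n hn1).2 hn
      linarith
    · intro a ha
      filter_upwards [eventually_ge_atTop 1] with n hn1
      have := ordStat_le_of_forall_le (hk n hn1).1 (hk n hn1).2 h1
      linarith
  exact ae_of_ae_map hpath.aemeasurable hsuff
end
end
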